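/- Let E : [0,T] → [0,∞) be C¹ with E' = −g where g is continuous and, by Cauchy–Schwarz, |g(t)| ≤ √(βX'(t))·√(2E(t)) for a nonnegative continuous X' with ∫₀ᵀ X'(t)dt = X and β > 0 (i.e. g(t) = ⟨Cu(t), v(t)⟩ with |Cu|² ≤ βX'-type bound and |v|² ≤ 2E). Then for every ν > 0: (1+ν)∫₀ᵀ E(t) dt ≥ T·E(0) − (βT²/(2ν))·X. -/

import Mathlib

open MeasureTheory intervalIntegral

/-- the double-integration estimate of Lemma PROP4: if `E ≥ 0` is `C¹`
on `[0,T]` with `E' = −g`, `|g(t)| ≤ √(β X'(t))·√(2 E(t))`, `X' ≥ 0` continuous with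
`∫₀ᵀ X' = X`, then for every `ν > 0`,
`(1+ν)∫₀ᵀ E ≥ T·E(0) − (βT²/(2ν))·X`. -/
theorem stmt_19 (T β X : ℝ) (E g X' : ℝ → ℝ)
    (hT : 0 < T) (hβ : 0 < β)
    (hgc : Continuous g) (hE : ∀ t, HasDerivAt E (-(g t)) t)
    (hEnn : ∀ t ∈ Set.Icc 0 T, 0 ≤ E t)
    (hX'c : Continuous X') (hX'nn : ∀ t ∈ Set.Icc 0 T, 0 ≤ X' t)
    (hXdef : (∫ t in (0:ℝ)..T, X' t) = X)
    (hbound : ∀ t ∈ Set.Icc 0 T, |g t| ≤ Real.sqrt (β * X' t) * Real.sqrt (2 * E t)) :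
    ∀ ν > (0:ℝ),
      (1 + ν) * ∫ t in (0:ℝ)..T, E t ≥ T * E 0 - (β * T ^ 2 / (2 * ν)) * X := by
  intro ν hν
  have hEc : Continuous E :=
    continuous_iff_continuousAt.mpr fun t => (hE t).continuousAt
  set I := ∫ t in (0:ℝ)..T, |g t| with hIdef
  have hFTC : ∀ t, E t = E 0 - ∫ s in (0:ℝ)..t, g s := by
    intro t
    have := intervalIntegral.integral_eq_sub_of_hasDerivAt
      (f := E) (f' := fun s => -(g s)) (a := 0) (b := t)
      (fun s _ => hE s) ((hgc.neg).intervalIntegrable 0 t)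
    rw [intervalIntegral.integral_neg] at this
    linarith [this]
  have hlow : ∀ t ∈ Set.Icc (0:ℝ) T, E 0 - I ≤ E t := by
    intro t ht
    obtain ⟨ht0, htT⟩ := ht
    have h1 : (∫ s in (0:ℝ)..t, g s) ≤ ∫ s in (0:ℝ)..t, |g s| :=
      intervalIntegral.integral_mono_on ht0 (hgc.intervalIntegrable 0 t)
        (hgc.abs.intervalIntegrable 0 t) (fun s _ => le_abs_self _)
    have h2 : (∫ s in (0:ℝ)..t, |g s|) ≤ I := by
      rw [hIdef, ← intervalIntegral.integral_add_adjacent_intervals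
        (hgc.abs.intervalIntegrable 0 t) (hgc.abs.intervalIntegrable t T)]
      have : 0 ≤ ∫ s in t..T, |g s| :=
        intervalIntegral.integral_nonneg htT (fun s _ => abs_nonneg _)
      linarith
    rw [hFTC t]; linarith
  have hint1 : T * (E 0 - I) ≤ ∫ t in (0:ℝ)..T, E t := by
    have := intervalIntegral.integral_mono_on (le_of_lt hT)
      (intervalIntegrable_const (μ := volume) (c := E 0 - I))
      (hEc.intervalIntegrable 0 T) hlow
    simp only [intervalIntegral.integral_const, smul_eq_mul, sub_zero] at this
    linarith [this]
  have hpt : ∀ t ∈ Set.Icc (0:ℝ) T,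
      |g t| ≤ β * X' t * T / (2 * ν) + (ν / T) * E t := by
    intro t ht
    have h1 : 0 ≤ β * X' t := mul_nonneg hβ.le (hX'nn t ht)
    have h2 : 0 ≤ 2 * E t := by linarith [hEnn t ht]
    have s1 : Real.sqrt (β * X' t) ^ 2 = β * X' t := Real.sq_sqrt h1
    have s2 : Real.sqrt (2 * E t) ^ 2 = 2 * E t := Real.sq_sqrt h2
    have hb := hbound t ht
    have key : 2 * ν * T * (Real.sqrt (β * X' t) * Real.sqrt (2 * E t)) ≤
        T ^ 2 * (β * X' t) + ν ^ 2 * (2 * E t) := by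
      nlinarith [sq_nonneg (T * Real.sqrt (β * X' t) - ν * Real.sqrt (2 * E t))]
    have heq : β * X' t * T / (2 * ν) + (ν / T) * E t
        = (T ^ 2 * (β * X' t) + ν ^ 2 * (2 * E t)) / (2 * ν * T) := by
      field_simp
    rw [heq, le_div_iff₀ (by positivity)]
    have hmul := mul_le_mul_of_nonneg_right hb (by positivity : (0:ℝ) ≤ 2 * ν * T)
    linarith [key, hmul]
  have hint2 : I ≤ β * X * T / (2 * ν) + (ν / T) * ∫ t in (0:ℝ)..T, E t := by
    have hc1 : Continuous fun t => β * X' t * T / (2 * ν) :=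
      (((continuous_const.mul hX'c).mul continuous_const).div_const (2 * ν))
    have hc2 : Continuous fun t => (ν / T) * E t := continuous_const.mul hEc
    have := intervalIntegral.integral_mono_on (le_of_lt hT)
      (hgc.abs.intervalIntegrable 0 T)
      ((hc1.add hc2).intervalIntegrable 0 T : IntervalIntegrable _ volume 0 T) hpt
    simp only [Pi.add_apply] at this
    rw [intervalIntegral.integral_add (hc1.intervalIntegrable 0 T)
      (hc2.intervalIntegrable 0 T), intervalIntegral.integral_const_mul] at this
    have hX'int : (∫ t in (0:ℝ)..T, β * X' t * T / (2 * ν)) = β * X * T / (2 * ν) := by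
      simp_rw [show ∀ t, β * X' t * T / (2 * ν) = (β * T / (2 * ν)) * X' t
        from fun t => by ring]
      rw [intervalIntegral.integral_const_mul, hXdef]; ring
    rw [hX'int] at this
    exact this
  have h3 : T * I ≤ β * X * T ^ 2 / (2 * ν) + ν * ∫ t in (0:ℝ)..T, E t := by
    have h := mul_le_mul_of_nonneg_left hint2 hT.le
    calc T * I ≤ T * (β * X * T / (2 * ν) + (ν / T) * ∫ t in (0:ℝ)..T, E t) := h
      _ = β * X * T ^ 2 / (2 * ν) + ν * ∫ t in (0:ℝ)..T, E t := by
          field_simp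
  have h4 : β * X * T ^ 2 / (2 * ν) = β * T ^ 2 / (2 * ν) * X := by ring
  linarith [hint1, h3]
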